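/- Let M be an ex-post mechanism with continuous output distributions (each M(X) has a density with respect to Lebesgue measure on 𝒴 × ℝ≥0) that satisfies pure ex-post privacy, i.e. for all neighbouring datasets X ∼ X', with probability 1 over (y, ε) ∼ M(X) one has p_{M(X)}(y, ε) ≤ e^{ε} · p_{M(X')}(y, ε). Let f be a randomised function from 𝒴 × ℝ≥0 to 𝒴' with continuous output distributions, and let M' = f ⊙ M be the post-processed mechanism whose output of interest is f applied to the output of M and whose returned privacy bound equals that of M. Then M' satisfies pure ex-post privacy: for all neighbouring X ∼ X', with probability 1 over (y', ε) ∼ M'(X), p_{M'(X)}(y', ε) ≤ e^{ε} · p_{M'(X')}(y', ε). -/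

import Mathlib

open MeasureTheory
open scoped NNReal ENNReal

/-- Auxiliary: if `g < h` pointwise on a measurable set `s`, while the integral of `h`
over `s` is at most that of `g`, which is finite, then `s` is null. -/
lemma null_of_setLIntegral_le {α : Type*} [MeasurableSpace α] (ν : Measure α)
    {s : Set α} (hs : MeasurableSet s) {g h : α → ℝ≥0∞}
    (hg : Measurable g) (hh : Measurable h)
    (hlt : ∀ z ∈ s, g z < h z)
    (hle : ∫⁻ z in s, h z ∂ν ≤ ∫⁻ z in s, g z ∂ν)
    (hfin : ∫⁻ z in s, g z ∂ν ≠ ⊤) : ν s = 0 := by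
  have hge : ∫⁻ z in s, g z ∂ν ≤ ∫⁻ z in s, h z ∂ν :=
    setLIntegral_mono hh fun z hz => (hlt z hz).le
  have heq : ∫⁻ z in s, h z ∂ν = ∫⁻ z in s, g z ∂ν := le_antisymm hle hge
  have hsub : ∫⁻ z in s, (h z - g z) ∂ν = 0 := by
    rw [lintegral_sub hg hfin
      ((ae_restrict_iff' hs).2 (Filter.Eventually.of_forall fun z hz => (hlt z hz).le)),
      heq, tsub_self]
  have h1 : ∀ᵐ z ∂ν.restrict s, h z - g z = 0 :=
    (lintegral_eq_zero_iff (hh.sub hg)).1 hsub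
  rw [ae_restrict_iff' hs] at h1
  refine measure_mono_null (fun z hz => ?_) (ae_iff.mp h1)
  intro himp
  exact absurd (tsub_eq_zero_iff_le.mp (himp hz)) (not_le.2 (hlt z hz))

/-- Pure ex-post privacy is immune to post-processing by a Markov kernel.
An ex-post mechanism `M` sends a dataset to a probability measure on `Y × ℝ≥0`
(output of interest, returned privacy bound), with density `p X` w.r.t. a common
σ-finite base measure.  Pure ex-post privacy of `M` says that for neighbouring
`X ∼ X'`, with probability 1 over `(y, ε) ∼ M X` one has
`p X (y,ε) ≤ exp ε * p X' (y,ε)`, i.e. the violation set has measure zero.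
The post-processed mechanism `M' = f ⊙ M` applies the kernel `f` to the output
of `M` and returns the same privacy bound; it again has densities `p' X` w.r.t.
a σ-finite base measure.  Then `M'` is pure ex-post private. -/
theorem pure_ex_post_privacy_post_processing
    {𝒳 Y Y' : Type*} [MeasurableSpace Y] [MeasurableSpace Y']
    (Neighbor : 𝒳 → 𝒳 → Prop) (hsymm : Symmetric Neighbor)
    (μ : Measure (Y × ℝ≥0)) [SigmaFinite μ]
    (μ' : Measure (Y' × ℝ≥0)) [SigmaFinite μ']
    (M : 𝒳 → Measure (Y × ℝ≥0)) (hMprob : ∀ X, IsProbabilityMeasure (M X))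
    (p : 𝒳 → Y × ℝ≥0 → ℝ)
    (hp_nonneg : ∀ X z, 0 ≤ p X z) (hp_meas : ∀ X, Measurable (p X))
    (hdens : ∀ X, M X = μ.withDensity fun z => ENNReal.ofReal (p X z))
    (f : ProbabilityTheory.Kernel (Y × ℝ≥0) Y') [ProbabilityTheory.IsMarkovKernel f]
    (M' : 𝒳 → Measure (Y' × ℝ≥0))
    (hM' : ∀ X, M' X = (M X).bind fun z => (f z).map fun y' => (y', z.2))
    (p' : 𝒳 → Y' × ℝ≥0 → ℝ)
    (hp'_nonneg : ∀ X z, 0 ≤ p' X z) (hp'_meas : ∀ X, Measurable (p' X))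
    (hdens' : ∀ X, M' X = μ'.withDensity fun z => ENNReal.ofReal (p' X z))
    (hpure : ∀ X X', Neighbor X X' →
      M X {z | Real.exp (z.2 : ℝ) * p X' z < p X z} = 0) :
    ∀ X X', Neighbor X X' →
      M' X {z | Real.exp (z.2 : ℝ) * p' X' z < p' X z} = 0 := by
  intro X X' hXX'
  classical
  -- the post-processing kernel, keeping the privacy bound coordinate
  set κ : ProbabilityTheory.Kernel (Y × ℝ≥0) (Y' × ℝ≥0) :=
    ProbabilityTheory.Kernel.prod f (ProbabilityTheory.Kernel.deterministic Prod.snd measurable_snd) with hκdef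
  have hκ : ∀ z : Y × ℝ≥0, κ z = (f z).map fun y' => (y', z.2) := by
    intro z
    rw [hκdef, ProbabilityTheory.Kernel.prod_apply,
      ProbabilityTheory.Kernel.deterministic_apply, Measure.prod_dirac]
  have hbind : ∀ X0, M' X0 = (M X0).bind fun z => κ z := by
    intro X0
    have : (fun z : Y × ℝ≥0 => (f z).map fun y' => (y', z.2)) = fun z => κ z :=
      funext fun z => (hκ z).symm
    rw [hM' X0, this]
  have hexpY : Measurable fun z : Y × ℝ≥0 => Real.exp (z.2 : ℝ) :=
    Real.measurable_exp.comp (measurable_coe_nnreal_real.comp measurable_snd)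
  have hexpY' : Measurable fun z : Y' × ℝ≥0 => Real.exp (z.2 : ℝ) :=
    Real.measurable_exp.comp (measurable_coe_nnreal_real.comp measurable_snd)
  set A : Set (Y' × ℝ≥0) := {z | Real.exp (z.2 : ℝ) * p' X' z < p' X z} with hAdef
  have hA : MeasurableSet A := measurableSet_lt (hexpY'.mul (hp'_meas X')) (hp'_meas X)
  set An : ℕ → Set (Y' × ℝ≥0) := fun n => A ∩ {z | z.2 ≤ (n : ℝ≥0)} with hAndef
  have hAn : ∀ n, MeasurableSet (An n) := fun n =>
    hA.inter (measurableSet_le measurable_snd measurable_const)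
  -- a.e. density inequality for M from pure ex-post privacy
  have hae : ∀ᵐ z ∂μ, ENNReal.ofReal (p X z) ≤
      ENNReal.ofReal (Real.exp (z.2 : ℝ)) * ENNReal.ofReal (p X' z) := by
    set N : Set (Y × ℝ≥0) := {z | Real.exp (z.2 : ℝ) * p X' z < p X z} with hNdef
    have hNm : MeasurableSet N := measurableSet_lt (hexpY.mul (hp_meas X')) (hp_meas X)
    have h0 : ∫⁻ z in N, ENNReal.ofReal (p X z) ∂μ = 0 := by
      have := hpure X X' hXX'
      rw [hdens X, withDensity_apply _ hNm] at this
      exact this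
    have h1 : ∀ᵐ z ∂μ.restrict N, ENNReal.ofReal (p X z) = 0 :=
      (lintegral_eq_zero_iff (hp_meas X).ennreal_ofReal).1 h0
    rw [ae_restrict_iff' hNm] at h1
    filter_upwards [h1] with z hz
    by_cases hzN : z ∈ N
    · simp [hz hzN]
    · have hle : p X z ≤ Real.exp (z.2 : ℝ) * p X' z := not_lt.1 hzN
      calc ENNReal.ofReal (p X z) ≤ ENNReal.ofReal (Real.exp (z.2 : ℝ) * p X' z) :=
            ENNReal.ofReal_le_ofReal hle
        _ = ENNReal.ofReal (Real.exp (z.2 : ℝ)) * ENNReal.ofReal (p X' z) :=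
            ENNReal.ofReal_mul (Real.exp_pos _).le
  -- per-level computation
  have key : ∀ n : ℕ, M' X (An n) = 0 := by
    intro n
    -- step 1: M' X (An n) as an integral against μ'
    have hL : M' X (An n) = ∫⁻ z' in An n, ENNReal.ofReal (p' X z') ∂μ' := by
      rw [hdens' X, withDensity_apply _ (hAn n)]
    -- step 2: M' X (An n) ≤ weighted integral against M' X'
    have hstep : M' X (An n) ≤
        ∫⁻ z' in An n, ENNReal.ofReal (Real.exp (z'.2 : ℝ)) * ENNReal.ofReal (p' X' z') ∂μ' := by
      have hκmeas : Measurable fun z : Y × ℝ≥0 => κ z (An n) :=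
        κ.measurable_coe (hAn n)
      have e1 : M' X (An n) = ∫⁻ z, κ z (An n) ∂(M X) := by
        rw [hbind X, Measure.bind_apply (hAn n) κ.measurable.aemeasurable]
      have e2 : ∫⁻ z, κ z (An n) ∂(M X)
          = ∫⁻ z, ENNReal.ofReal (p X z) * κ z (An n) ∂μ := by
        rw [hdens X, lintegral_withDensity_eq_lintegral_mul μ (hp_meas X).ennreal_ofReal hκmeas]
        rfl
      have e3 : ∫⁻ z, ENNReal.ofReal (p X z) * κ z (An n) ∂μ ≤
          ∫⁻ z, ENNReal.ofReal (p X' z) *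
            (ENNReal.ofReal (Real.exp (z.2 : ℝ)) * κ z (An n)) ∂μ := by
        refine lintegral_mono_ae ?_
        filter_upwards [hae] with z hz
        calc ENNReal.ofReal (p X z) * κ z (An n)
            ≤ (ENNReal.ofReal (Real.exp (z.2 : ℝ)) * ENNReal.ofReal (p X' z)) * κ z (An n) :=
              mul_le_mul_left hz _
          _ = ENNReal.ofReal (p X' z) * (ENNReal.ofReal (Real.exp (z.2 : ℝ)) * κ z (An n)) := by
              ring
      have e4 : ∫⁻ z, ENNReal.ofReal (p X' z) *
            (ENNReal.ofReal (Real.exp (z.2 : ℝ)) * κ z (An n)) ∂μ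
          = ∫⁻ z, ENNReal.ofReal (Real.exp (z.2 : ℝ)) * κ z (An n) ∂(M X') := by
        rw [hdens X']
        exact (lintegral_withDensity_eq_lintegral_mul μ (hp_meas X').ennreal_ofReal
          (hexpY.ennreal_ofReal.mul hκmeas)).symm
      -- the exponential weight can be pulled inside the kernel integral
      have hind : Measurable fun z' : Y' × ℝ≥0 =>
          (An n).indicator (fun z' => ENNReal.ofReal (Real.exp (z'.2 : ℝ))) z' :=
        hexpY'.ennreal_ofReal.indicator (hAn n)
      have e5 : ∀ z : Y × ℝ≥0,
          ENNReal.ofReal (Real.exp (z.2 : ℝ)) * κ z (An n)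
          = ∫⁻ z', (An n).indicator (fun z' => ENNReal.ofReal (Real.exp (z'.2 : ℝ))) z' ∂(κ z) := by
        intro z
        rw [hκ z, lintegral_map hind measurable_prodMk_right,
          Measure.map_apply measurable_prodMk_right (hAn n)]
        have hpre : MeasurableSet ((fun y' : Y' => (y', z.2)) ⁻¹' An n) :=
          measurable_prodMk_right (hAn n)
        have : ∀ y' : Y', (An n).indicator
            (fun z' : Y' × ℝ≥0 => ENNReal.ofReal (Real.exp (z'.2 : ℝ))) (y', z.2)
            = ((fun y' : Y' => (y', z.2)) ⁻¹' An n).indicator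
              (fun _ => ENNReal.ofReal (Real.exp (z.2 : ℝ))) y' := by
          intro y'
          by_cases h : (y', z.2) ∈ An n <;> simp [Set.indicator, h]
        rw [lintegral_congr this, lintegral_indicator hpre _, setLIntegral_const]
      have e6 : ∫⁻ z, ENNReal.ofReal (Real.exp (z.2 : ℝ)) * κ z (An n) ∂(M X')
          = ∫⁻ z' in An n, ENNReal.ofReal (Real.exp (z'.2 : ℝ)) ∂(M' X') := by
        rw [hbind X', ← lintegral_indicator (hAn n),
          Measure.lintegral_bind κ.measurable.aemeasurable hind.aemeasurable]
        exact lintegral_congr fun z => e5 z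
      have e7 : ∫⁻ z' in An n, ENNReal.ofReal (Real.exp (z'.2 : ℝ)) ∂(M' X')
          = ∫⁻ z' in An n,
              ENNReal.ofReal (Real.exp (z'.2 : ℝ)) * ENNReal.ofReal (p' X' z') ∂μ' := by
        rw [hdens' X', setLIntegral_withDensity_eq_setLIntegral_mul μ'
          (hp'_meas X').ennreal_ofReal hexpY'.ennreal_ofReal (hAn n)]
        exact lintegral_congr fun z' => by simp [Pi.mul_apply, mul_comm]
      calc M' X (An n) = ∫⁻ z, κ z (An n) ∂(M X) := e1
        _ = ∫⁻ z, ENNReal.ofReal (p X z) * κ z (An n) ∂μ := e2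
        _ ≤ ∫⁻ z, ENNReal.ofReal (p X' z) *
              (ENNReal.ofReal (Real.exp (z.2 : ℝ)) * κ z (An n)) ∂μ := e3
        _ = ∫⁻ z, ENNReal.ofReal (Real.exp (z.2 : ℝ)) * κ z (An n) ∂(M X') := e4
        _ = ∫⁻ z' in An n, ENNReal.ofReal (Real.exp (z'.2 : ℝ)) ∂(M' X') := e6
        _ = ∫⁻ z' in An n,
              ENNReal.ofReal (Real.exp (z'.2 : ℝ)) * ENNReal.ofReal (p' X' z') ∂μ' := e7
    -- finiteness of the bounding integral
    have hfin : ∫⁻ z' in An n,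
        ENNReal.ofReal (Real.exp (z'.2 : ℝ)) * ENNReal.ofReal (p' X' z') ∂μ' ≠ ⊤ := by
      have hb : ∫⁻ z' in An n,
          ENNReal.ofReal (Real.exp (z'.2 : ℝ)) * ENNReal.ofReal (p' X' z') ∂μ' ≤
          ENNReal.ofReal (Real.exp (n : ℝ)) * ∫⁻ z' in An n, ENNReal.ofReal (p' X' z') ∂μ' := by
        rw [← lintegral_const_mul _ (hp'_meas X').ennreal_ofReal]
        refine setLIntegral_mono (measurable_const.mul (hp'_meas X').ennreal_ofReal) ?_
        intro z' hz'
        refine mul_le_mul_left (ENNReal.ofReal_le_ofReal (Real.exp_le_exp.2 ?_)) _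
        exact_mod_cast hz'.2
      have hMfin : ∫⁻ z' in An n, ENNReal.ofReal (p' X' z') ∂μ' ≤ 1 := by
        rw [← withDensity_apply _ (hAn n), ← hdens' X']
        have huniv : M' X' Set.univ = 1 := by
          haveI := hMprob X'
          rw [hbind X', Measure.bind_apply MeasurableSet.univ κ.measurable.aemeasurable]
          simp
        calc M' X' (An n) ≤ M' X' Set.univ := measure_mono (Set.subset_univ _)
          _ = 1 := huniv
      refine ne_top_of_le_ne_top ?_ hb
      exact ENNReal.mul_ne_top ENNReal.ofReal_ne_top (ne_top_of_le_ne_top ENNReal.one_ne_top hMfin)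
    -- strict pointwise inequality on An n
    have hlt : ∀ z' ∈ An n,
        ENNReal.ofReal (Real.exp (z'.2 : ℝ)) * ENNReal.ofReal (p' X' z') <
          ENNReal.ofReal (p' X z') := by
      intro z' hz'
      have h : Real.exp (z'.2 : ℝ) * p' X' z' < p' X z' := hz'.1
      have hpos : 0 < p' X z' :=
        lt_of_le_of_lt (mul_nonneg (Real.exp_pos _).le (hp'_nonneg X' z')) h
      rw [← ENNReal.ofReal_mul (Real.exp_pos _).le]
      exact (ENNReal.ofReal_lt_ofReal_iff hpos).2 h
    have hμ'An : μ' (An n) = 0 := by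
      refine null_of_setLIntegral_le μ' (hAn n) (hexpY'.ennreal_ofReal.mul
        (hp'_meas X').ennreal_ofReal) (hp'_meas X).ennreal_ofReal hlt ?_ hfin
      rw [← hL]; exact hstep
    rw [hdens' X]
    exact (withDensity_absolutelyContinuous μ' _) hμ'An
  -- assemble
  have hsub : A ⊆ ⋃ n, An n := by
    intro z hz
    obtain ⟨n, hn⟩ := exists_nat_ge z.2
    exact Set.mem_iUnion.2 ⟨n, hz, hn⟩
  exact measure_mono_null hsub (measure_iUnion_null key)
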